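/- arXiv:1911.08014 — 2 statements merged into one kernel-verified Lean document; each statement's English description precedes it below -/
import Mathlib

section
/- Two positive quadruples of Lagrangians (L1, M1, L2, M2) and (L1', M1', L2', M2') in (ℝ^{2n}, ω) have the same invariant Λ ∈ Δ_n (the unique diagonal matrix occurring in any symplectic basis in standard position) if and only if there exists g ∈ Sp(2n,ℝ) with g·L1 = L1', g·M1 = M1', g·L2 = L2', g·M2 = M2'. Moreover, every Λ ∈ Δ_n is the invariant of some positive quadruple. Hence the invariant Λ induces a bijection between the set of Sp(2n,ℝ)-orbits of positive quadruples of Lagrangians and Δ_n. -/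
open Matrix

noncomputable section

/-- The symplectic vector space `ℝ^{2n}`, with coordinates indexed by `Fin n ⊕ Fin n`. -/
abbrev V2 (n : ℕ) : Type := (Fin n ⊕ Fin n) → ℝ

/-- The standard matrix `J = [[0, Id],[−Id, 0]]`. -/
def Jn (n : ℕ) : Matrix (Fin n ⊕ Fin n) (Fin n ⊕ Fin n) ℝ :=
  Matrix.fromBlocks 0 1 (-1) 0

/-- The standard symplectic form `ω(x,y) = ᵀx J y` on `ℝ^{2n}`. -/
def omegaForm (n : ℕ) (x y : V2 n) : ℝ := x ⬝ᵥ (Jn n).mulVec y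

/-- A subspace is Lagrangian if it has dimension `n` and `ω` vanishes on it. -/
def IsLagrangian (n : ℕ) (L : Submodule ℝ (V2 n)) : Prop :=
  Module.finrank ℝ L = n ∧ ∀ x ∈ L, ∀ y ∈ L, omegaForm n x y = 0

/-- Membership in `Sp(2n,ℝ)`: `ᵀg J g = J`. -/
def IsSymplectic (n : ℕ) (g : Matrix (Fin n ⊕ Fin n) (Fin n ⊕ Fin n) ℝ) : Prop :=
  gᵀ * Jn n * g = Jn n

/-- `φ : L → L'` is the map whose graph is `M`, i.e. `M = {e + φ e : e ∈ L}`. -/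
def IsGraphMap (n : ℕ) (L M L' : Submodule ℝ (V2 n)) (φ : L →ₗ[ℝ] L') : Prop :=
  ∀ x : V2 n, x ∈ M ↔ ∃ e : L, x = (e : V2 n) + (φ e : V2 n)

/-- `tmul v g` is the tuple `v·g`, with `(v·g)_j = Σ_i g_{ij} • v_i`. -/
def tmul (n : ℕ) (v : Fin n → V2 n) (g : Matrix (Fin n) (Fin n) ℝ) : Fin n → V2 n :=
  fun j => ∑ i, g i j • v i

/-- A symplectic basis of `ℝ^{2n}`: a pair of `n`-tuples forming a basis, with
`ω(e_i,e_j) = ω(f_i,f_j) = 0` and `ω(e_i,f_j) = δ_{ij}`. -/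
def IsSymplecticBasis (n : ℕ) (e f : Fin n → V2 n) : Prop :=
  (∀ i j, omegaForm n (e i) (e j) = 0) ∧ (∀ i j, omegaForm n (f i) (f j) = 0) ∧
  (∀ i j, omegaForm n (e i) (f j) = if i = j then 1 else 0) ∧
  LinearIndependent ℝ (Sum.elim e f) ∧
  Submodule.span ℝ (Set.range (Sum.elim e f)) = ⊤

/-- Membership in `Δ_n`: diagonal matrices with positive nondecreasing entries. -/
def InDelta (n : ℕ) (Λ : Matrix (Fin n) (Fin n) ℝ) : Prop :=
  ∃ d : Fin n → ℝ, Λ = Matrix.diagonal d ∧ (∀ i, 0 < d i) ∧ Monotone d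

/-- A positive quadruple of Lagrangians: the triples `(L1,M1,L2)` and `(L1,M2,L2)` are
pairwise transverse, and the Maslov forms `[L1,M1,L2]` and `[L2,M2,L1]` are positive
definite. -/
def PositiveQuadruple (n : ℕ) (L1 M1 L2 M2 : Submodule ℝ (V2 n)) : Prop :=
  IsLagrangian n L1 ∧ IsLagrangian n M1 ∧ IsLagrangian n L2 ∧ IsLagrangian n M2 ∧
  L1 ⊓ M1 = ⊥ ∧ M1 ⊓ L2 = ⊥ ∧ L1 ⊓ L2 = ⊥ ∧ L1 ⊓ M2 = ⊥ ∧ M2 ⊓ L2 = ⊥ ∧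
  (∃ φ : L1 →ₗ[ℝ] L2, IsGraphMap n L1 M1 L2 φ ∧
    ∀ v : ↥L1, v ≠ 0 → 0 < omegaForm n (v : V2 n) (φ v : V2 n)) ∧
  (∃ ψ : L2 →ₗ[ℝ] L1, IsGraphMap n L2 M2 L1 ψ ∧
    ∀ w : ↥L2, w ≠ 0 → 0 < omegaForm n (w : V2 n) (ψ w : V2 n))

/-- A symplectic basis `(e,f)` is in standard position with respect to `(L1,M1,L2,M2)`,
with invariant `Λ ∈ Δ_n`, if `L1 = Span e`, `L2 = Span f`, `M1 = Span (e+f)` and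
`M2 = Span (e − f·Λ)`. -/
def StandardPosition (n : ℕ) (e f : Fin n → V2 n)
    (L1 M1 L2 M2 : Submodule ℝ (V2 n)) (Λ : Matrix (Fin n) (Fin n) ℝ) : Prop :=
  IsSymplecticBasis n e f ∧ InDelta n Λ ∧
  L1 = Submodule.span ℝ (Set.range e) ∧
  L2 = Submodule.span ℝ (Set.range f) ∧
  M1 = Submodule.span ℝ (Set.range (e + f)) ∧
  M2 = Submodule.span ℝ (Set.range (e - tmul n f Λ))

def omegaBil (n : ℕ) : V2 n →ₗ[ℝ] V2 n →ₗ[ℝ] ℝ :=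
  LinearMap.mk₂ ℝ (omegaForm n)
    (fun x x' y => by simp [omegaForm, add_dotProduct])
    (fun c x y => by simp [omegaForm, smul_dotProduct])
    (fun x y y' => by simp [omegaForm, mulVec_add, dotProduct_add])
    (fun c x y => by simp [omegaForm, mulVec_smul, dotProduct_smul])

lemma omegaForm_eq (n : ℕ) (x y : V2 n) : omegaForm n x y = omegaBil n x y := rfl

lemma omega_sum_sum {n : ℕ} {ι κ : Type*} [Fintype ι] [Fintype κ]
    (a : ι → ℝ) (b : κ → ℝ) (x : ι → V2 n) (y : κ → V2 n) :
    omegaForm n (∑ i, a i • x i) (∑ j, b j • y j) =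
      ∑ i, ∑ j, a i * b j * omegaForm n (x i) (y j) := by
  simp only [omegaForm_eq, map_sum, _root_.map_smul, LinearMap.sum_apply, LinearMap.smul_apply,
    smul_eq_mul, Finset.mul_sum]
  rw [Finset.sum_comm]
  exact Finset.sum_congr rfl fun i _ => Finset.sum_congr rfl fun j _ => by ring

lemma omega_span_zero {n : ℕ} (v w : Fin n → V2 n)
    (h : ∀ i j, omegaForm n (v i) (w j) = 0) :
    ∀ x ∈ Submodule.span ℝ (Set.range v), ∀ y ∈ Submodule.span ℝ (Set.range w),
      omegaForm n x y = 0 := by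
  intro x hx y hy
  obtain ⟨a, rfl⟩ := (Submodule.mem_span_range_iff_exists_fun ℝ).mp hx
  obtain ⟨b, rfl⟩ := (Submodule.mem_span_range_iff_exists_fun ℝ).mp hy
  rw [omega_sum_sum]
  simp [h]

lemma conj_dot {n : ℕ} (A g : Matrix (Fin n ⊕ Fin n) (Fin n ⊕ Fin n) ℝ) (x y : V2 n) :
    (g *ᵥ x) ⬝ᵥ A *ᵥ (g *ᵥ y) = x ⬝ᵥ (gᵀ * A * g) *ᵥ y := by
  rw [Matrix.mulVec_mulVec, ← Matrix.vecMul_transpose g x, ← Matrix.dotProduct_mulVec x gᵀ,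
    Matrix.mulVec_mulVec, ← Matrix.mul_assoc]

lemma Jn_mul_Jn (n : ℕ) : Jn n * Jn n = -1 := by
  have h : (Matrix.fromBlocks (-1) 0 0 (-1) : Matrix (Fin n ⊕ Fin n) (Fin n ⊕ Fin n) ℝ)
      = -Matrix.fromBlocks 1 0 0 1 := by
    ext i j
    rcases i with i | i <;> rcases j with j | j <;> simp [Matrix.fromBlocks]
  simp only [Jn, Matrix.fromBlocks_multiply]
  rw [show (0 : Matrix (Fin n) (Fin n) ℝ) * 0 + 1 * (-1) = -1 by noncomm_ring,
    show (0 : Matrix (Fin n) (Fin n) ℝ) * 1 + 1 * 0 = 0 by noncomm_ring,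
    show (-1 : Matrix (Fin n) (Fin n) ℝ) * 0 + 0 * (-1) = 0 by noncomm_ring,
    show (-1 : Matrix (Fin n) (Fin n) ℝ) * 1 + 0 * 0 = -1 by noncomm_ring, h, Matrix.fromBlocks_one]

lemma Jn_det_ne_zero (n : ℕ) : (Jn n).det ≠ 0 := by
  intro h
  have h2 : (Jn n).det * (Jn n).det = ((-1 : Matrix (Fin n ⊕ Fin n) (Fin n ⊕ Fin n) ℝ)).det := by
    rw [← Matrix.det_mul, Jn_mul_Jn]
  rw [h, mul_zero] at h2
  have h3 : ((-1 : Matrix (Fin n ⊕ Fin n) (Fin n ⊕ Fin n) ℝ)).det = (-1 : ℝ) ^ (n + n) := by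
    rw [show ((-1 : Matrix (Fin n ⊕ Fin n) (Fin n ⊕ Fin n) ℝ)) = -(1 : Matrix _ _ ℝ) by simp,
      Matrix.det_neg, Matrix.det_one, Fintype.card_sum, Fintype.card_fin]
    simp
  rw [h3, Even.neg_one_pow ⟨n, rfl⟩] at h2
  exact one_ne_zero h2.symm

lemma symplectic_det_ne_zero {n : ℕ} {g : Matrix (Fin n ⊕ Fin n) (Fin n ⊕ Fin n) ℝ}
    (hg : IsSymplectic n g) : g.det ≠ 0 := by
  intro h
  have := congrArg Matrix.det hg
  rw [Matrix.det_mul, Matrix.det_mul, Matrix.det_transpose, h] at this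
  simp at this
  exact Jn_det_ne_zero n this.symm

lemma omega_mulVec {n : ℕ} {g : Matrix (Fin n ⊕ Fin n) (Fin n ⊕ Fin n) ℝ}
    (hg : IsSymplectic n g) (x y : V2 n) :
    omegaForm n (g *ᵥ x) (g *ᵥ y) = omegaForm n x y := by
  unfold omegaForm
  rw [conj_dot, hg]

lemma isSymplectic_of_omega {n : ℕ} {g : Matrix (Fin n ⊕ Fin n) (Fin n ⊕ Fin n) ℝ}
    (h : ∀ x y, omegaForm n (g *ᵥ x) (g *ᵥ y) = omegaForm n x y) : IsSymplectic n g := by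
  ext i j
  have := h (Pi.single i 1) (Pi.single j 1)
  unfold omegaForm at this
  rw [conj_dot] at this
  rw [Matrix.mulVec_single, Matrix.mulVec_single] at this
  rw [single_dotProduct, single_dotProduct] at this
  simpa using this
lemma omega_antisymm {n : ℕ} (x y : V2 n) : omegaForm n x y = -omegaForm n y x := by
  unfold omegaForm
  have hJ : (Jn n)ᵀ = -Jn n := by
    ext i j
    rcases i with i | i <;> rcases j with j | j <;>
      simp [Jn, Matrix.fromBlocks_transpose, Matrix.fromBlocks, Matrix.one_apply, eq_comm]
  have h1 : x ᵥ* Jn n = (Jn n)ᵀ *ᵥ x := by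
    conv_lhs => rw [← Matrix.transpose_transpose (Jn n), Matrix.vecMul_transpose]
  rw [Matrix.dotProduct_mulVec, h1, hJ, Matrix.neg_mulVec, neg_dotProduct,
    dotProduct_comm]

def sympBasis {n : ℕ} {e f : Fin n → V2 n} (h : IsSymplecticBasis n e f) :
    Module.Basis (Fin n ⊕ Fin n) ℝ (V2 n) :=
  Module.Basis.mk h.2.2.2.1 (le_of_eq h.2.2.2.2.symm)

@[simp] lemma sympBasis_apply {n : ℕ} {e f : Fin n → V2 n} (h : IsSymplecticBasis n e f)
    (k : Fin n ⊕ Fin n) : sympBasis h k = Sum.elim e f k := by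
  simp [sympBasis]

/-- every vector is a combination of a spanning family -/
lemma exists_repr {n : ℕ} {e f : Fin n → V2 n} (h : IsSymplecticBasis n e f) (x : V2 n) :
    ∃ c : (Fin n ⊕ Fin n) → ℝ, ∑ k, c k • Sum.elim e f k = x :=
  (Submodule.mem_span_range_iff_exists_fun ℝ).mp (by rw [h.2.2.2.2]; trivial)

lemma exists_symplectic_map {n : ℕ} {e f e' f' : Fin n → V2 n}
    (h : IsSymplecticBasis n e f) (h' : IsSymplecticBasis n e' f') :
    ∃ g : Matrix (Fin n ⊕ Fin n) (Fin n ⊕ Fin n) ℝ, IsSymplectic n g ∧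
      (∀ k, g *ᵥ Sum.elim e f k = Sum.elim e' f' k) := by
  set B := sympBasis h with hB
  set T : V2 n →ₗ[ℝ] V2 n := B.constr ℝ (Sum.elim e' f') with hT
  refine ⟨LinearMap.toMatrix' T, ?_, ?_⟩
  · -- symplectic
    have hg : ∀ x, (LinearMap.toMatrix' T) *ᵥ x = T x := by
      intro x
      rw [← Matrix.toLin'_apply, Matrix.toLin'_toMatrix']
    have hTB : ∀ k, T (Sum.elim e f k) = Sum.elim e' f' k := by
      intro k
      have := B.constr_basis ℝ (Sum.elim e' f') k
      rwa [hB, sympBasis_apply] at this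
    apply isSymplectic_of_omega
    intro x y
    rw [hg, hg]
    obtain ⟨c, rfl⟩ := exists_repr h x
    obtain ⟨d, rfl⟩ := exists_repr h y
    rw [map_sum, map_sum]
    simp only [_root_.map_smul]
    rw [omega_sum_sum, omega_sum_sum]
    refine Finset.sum_congr rfl fun k _ => Finset.sum_congr rfl fun l _ => ?_
    rw [hTB, hTB]
    congr 1
    -- omega on basis vectors agree
    rcases k with k | k <;> rcases l with l | l <;>
        simp only [Sum.elim_inl, Sum.elim_inr]
    · simp [h.1, h'.1]
    · simp [h.2.2.1, h'.2.2.1]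
    · rw [show omegaForm n (f' k) (e' l) = -omegaForm n (e' l) (f' k) from omega_antisymm _ _,
        show omegaForm n (f k) (e l) = -omegaForm n (e l) (f k) from omega_antisymm _ _,
        h.2.2.1, h'.2.2.1]
    · simp [h.2.1, h'.2.1]
  · intro k
    rw [← Matrix.toLin'_apply, Matrix.toLin'_toMatrix']
    have := B.constr_basis ℝ (Sum.elim e' f') k
    rwa [hB, sympBasis_apply] at this
lemma indep_coeffs {n : ℕ} {e f : Fin n → V2 n}
    (hli : LinearIndependent ℝ (Sum.elim e f)) (a b : Fin n → ℝ)
    (hab : ∑ i, a i • e i + ∑ i, b i • f i = 0) : ∀ i, a i = 0 ∧ b i = 0 := by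
  have key := Fintype.linearIndependent_iff.mp hli (Sum.elim a b)
  have hsum : ∑ k : Fin n ⊕ Fin n, Sum.elim a b k • Sum.elim e f k = 0 := by
    rw [Fintype.sum_sum_type]
    simpa using hab
  intro i
  exact ⟨key hsum (Sum.inl i), key hsum (Sum.inr i)⟩

lemma tmul_diagonal {n : ℕ} (f : Fin n → V2 n) (d : Fin n → ℝ) (j : Fin n) :
    tmul n f (Matrix.diagonal d) j = d j • f j := by
  unfold tmul
  rw [Finset.sum_eq_single j]
  · simp [Matrix.diagonal]
  · intro i _ hij
    simp [Matrix.diagonal_apply_ne _ hij]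
  · simp
open Polynomial in
lemma diag_conj_eq {n : ℕ} {d d' : Fin n → ℝ} (hd : Monotone d) (hd' : Monotone d')
    {M : Matrix (Fin n) (Fin n) ℝ} (hdet : M.det ≠ 0)
    (hcomm : M * Matrix.diagonal d' = Matrix.diagonal d * M) : d = d' := by
  -- pass to ℝ[X]
  set P : Matrix (Fin n) (Fin n) ℝ[X] := M.map C with hP
  have hcomm' : P * Matrix.diagonal (fun i => C (d' i)) =
      Matrix.diagonal (fun i => C (d i)) * P := by
    have := congrArg (Matrix.map · (C : ℝ →+* ℝ[X])) hcomm
    simpa [Matrix.map_mul, Matrix.diagonal_map (map_zero C)] using this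
  have key : (Matrix.diagonal (fun i => X - C (d i))) * P =
      P * (Matrix.diagonal (fun i => X - C (d' i))) := by
    have h1 : (Matrix.diagonal (fun i => X - C (d i)) : Matrix (Fin n) (Fin n) ℝ[X]) =
        (X : ℝ[X]) • (1 : Matrix (Fin n) (Fin n) ℝ[X]) - Matrix.diagonal (fun i => C (d i)) := by
      rw [Matrix.smul_one_eq_diagonal, ← Matrix.diagonal_sub]
    have h2 : (Matrix.diagonal (fun i => X - C (d' i)) : Matrix (Fin n) (Fin n) ℝ[X]) =
        (X : ℝ[X]) • (1 : Matrix (Fin n) (Fin n) ℝ[X]) - Matrix.diagonal (fun i => C (d' i)) := by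
      rw [Matrix.smul_one_eq_diagonal, ← Matrix.diagonal_sub]
    rw [h1, h2, Matrix.sub_mul, Matrix.mul_sub, Matrix.smul_mul, Matrix.one_mul,
      Matrix.mul_smul, Matrix.mul_one, hcomm']
  have hdets := congrArg Matrix.det key
  rw [Matrix.det_mul, Matrix.det_mul, Matrix.det_diagonal, Matrix.det_diagonal] at hdets
  have hPdet : P.det = C M.det := (RingHom.map_det C M).symm
  have hPne : P.det ≠ 0 := by
    rw [hPdet]
    simpa using hdet
  have hprod : (∏ i, (X - C (d i))) = ∏ i, (X - C (d' i)) := by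
    have := hdets
    rw [hPdet] at this
    -- (∏ (X - C d)) * C det = C det * (∏ (X - C d'))
    have h3 : (∏ i, (X - C (d i))) * C M.det = (∏ i, (X - C (d' i))) * C M.det := by
      rw [this]; ring
    exact mul_right_cancel₀ (by simpa using hdet) h3
  -- multisets of roots
  have hms : Multiset.map d Finset.univ.val = Multiset.map d' Finset.univ.val := by
    have r1 := Polynomial.roots_multiset_prod_X_sub_C (Multiset.map d Finset.univ.val)
    have r2 := Polynomial.roots_multiset_prod_X_sub_C (Multiset.map d' Finset.univ.val)
    rw [← r1, ← r2]
    congr 1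
    rw [Multiset.map_map, Multiset.map_map]
    calc (Multiset.map ((fun a => X - C a) ∘ d) Finset.univ.val).prod
        = ∏ i, (X - C (d i)) := by rw [Finset.prod_eq_multiset_prod]; rfl
      _ = ∏ i, (X - C (d' i)) := hprod
      _ = (Multiset.map ((fun a => X - C a) ∘ d') Finset.univ.val).prod := by
          rw [Finset.prod_eq_multiset_prod]; rfl
  -- sorted lists
  have hperm : (List.ofFn d).Perm (List.ofFn d') := by
    rw [← Multiset.coe_eq_coe, ← Fin.univ_val_map, ← Fin.univ_val_map]
    exact hms
  have hs1 : (List.ofFn d).Pairwise (· ≤ ·) := by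
    rw [List.pairwise_ofFn]
    intro i j hij
    exact hd hij.le
  have hs2 : (List.ofFn d').Pairwise (· ≤ ·) := by
    rw [List.pairwise_ofFn]
    intro i j hij
    exact hd' hij.le
  exact List.ofFn_injective (List.Perm.eq_of_pairwise' hs1 hs2 hperm)
lemma invariant_unique {n : ℕ} {e f e' f' : Fin n → V2 n}
    {Λ Λ' : Matrix (Fin n) (Fin n) ℝ} {L1 M1 L2 M2 : Submodule ℝ (V2 n)}
    (h : StandardPosition n e f L1 M1 L2 M2 Λ)
    (h' : StandardPosition n e' f' L1 M1 L2 M2 Λ') : Λ = Λ' := by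
  obtain ⟨hsb, ⟨d, rfl, hdpos, hdmono⟩, hL1, hL2, hM1, hM2⟩ := h
  obtain ⟨hsb', ⟨d', rfl, hdpos', hdmono'⟩, hL1', hL2', hM1', hM2'⟩ := h'
  have hli := hsb.2.2.2.1
  -- coefficients
  have hA : ∀ j, ∃ c : Fin n → ℝ, ∑ i, c i • e i = e' j := by
    intro j
    have : e' j ∈ L1 := hL1' ▸ Submodule.subset_span (Set.mem_range_self j)
    rw [hL1] at this
    exact (Submodule.mem_span_range_iff_exists_fun ℝ).mp this
  have hB : ∀ j, ∃ c : Fin n → ℝ, ∑ i, c i • f i = f' j := by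
    intro j
    have : f' j ∈ L2 := hL2' ▸ Submodule.subset_span (Set.mem_range_self j)
    rw [hL2] at this
    exact (Submodule.mem_span_range_iff_exists_fun ℝ).mp this
  choose A hAe using hA
  choose B hBf using hB
  -- M1 relation: A = B
  have hAB : A = B := by
    funext j i
    have hm : e' j + f' j ∈ M1 := by
      rw [hM1']
      exact Submodule.subset_span ⟨j, rfl⟩
    rw [hM1] at hm
    obtain ⟨c, hc⟩ := (Submodule.mem_span_range_iff_exists_fun ℝ).mp hm
    -- ∑ c i • (e i + f i) = e' j + f' j = ∑ A j i • e i + ∑ B j i • f i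
    have heq : ∑ i, (A j i - c i) • e i + ∑ i, (B j i - c i) • f i = 0 := by
      have h1 : ∑ i, c i • e i + ∑ i, c i • f i = ∑ i, A j i • e i + ∑ i, B j i • f i := by
        rw [hAe, hBf, ← hc]
        rw [← Finset.sum_add_distrib]
        congr 1; funext i; simp [Pi.add_apply, smul_add]
      simp only [sub_smul, Finset.sum_sub_distrib]
      rw [sub_add_sub_comm, h1, sub_eq_zero]
    have := indep_coeffs hli _ _ heq
    have h1 := (this i).1
    have h2 := (this i).2
    linarith [sub_eq_zero.mp (by linarith : A j i - c i = 0)]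
  -- M2 relation
  have hM2rel : ∀ j i, A j i * d' j = d i * A j i := by
    intro j i
    have hm : e' j - d' j • f' j ∈ M2 := by
      rw [hM2']
      refine Submodule.subset_span ⟨j, ?_⟩
      simp [Pi.sub_apply, tmul_diagonal]
    rw [hM2] at hm
    obtain ⟨c, hc⟩ := (Submodule.mem_span_range_iff_exists_fun ℝ).mp hm
    have hc' : ∑ i, c i • e i - ∑ i, (c i * d i) • f i = e' j - d' j • f' j := by
      rw [← hc]
      rw [← Finset.sum_sub_distrib]
      congr 1; funext i
      simp [Pi.sub_apply, tmul_diagonal, smul_sub, smul_smul, mul_comm]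
    have hBf' : ∀ j, ∑ i, A j i • f i = f' j := by
      intro j; rw [hAB]; exact hBf j
    have hrhs : e' j - d' j • f' j = ∑ i, A j i • e i - ∑ i, (d' j * A j i) • f i := by
      rw [← hAe j, ← hBf' j, Finset.smul_sum]
      congr 1
      refine Finset.sum_congr rfl fun i _ => ?_
      rw [smul_smul]
    have heq : ∑ i, (c i - A j i) • e i + ∑ i, (d' j * A j i - c i * d i) • f i = 0 := by
      have := hc'.trans hrhs
      simp only [sub_smul, Finset.sum_sub_distrib]
      have halg : ∀ a b a' b' : V2 n, a - b = a' - b' → (a - a') + (b' - b) = 0 := by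
        intro a b a' b' habs
        have : a - a' = b - b' := by
          rw [sub_eq_sub_iff_sub_eq_sub] at habs
          exact habs
        rw [this]; abel
      exact halg _ _ _ _ this
    have hz := indep_coeffs hli _ _ heq
    have h1 := (hz i).1
    have h2 := (hz i).2
    have hca : c i = A j i := by linarith
    have : d' j * A j i = c i * d i := by linarith
    rw [hca] at this
    linarith [this]
  -- the change-of-basis matrix
  set M : Matrix (Fin n) (Fin n) ℝ := Matrix.of (fun i j => A j i) with hMdef
  have hli' : LinearIndependent ℝ e' := by
    have := hsb'.2.2.2.1.comp Sum.inl Sum.inl_injective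
    simpa using this
  have hdet : M.det ≠ 0 := by
    intro hdet0
    obtain ⟨v, hv, hMv⟩ := exists_mulVec_eq_zero_iff.mpr hdet0
    have hsum : ∑ j, v j • e' j = 0 := by
      calc ∑ j, v j • e' j = ∑ j, ∑ i, (v j * A j i) • e i := by
            refine Finset.sum_congr rfl fun j _ => ?_
            rw [← hAe j, Finset.smul_sum]
            simp [smul_smul]
        _ = ∑ i, ∑ j, (v j * A j i) • e i := Finset.sum_comm
        _ = ∑ i, (∑ j, A j i * v j) • e i := by
            refine Finset.sum_congr rfl fun i _ => ?_
            rw [← Finset.sum_smul]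
            congr 1
            exact Finset.sum_congr rfl fun j _ => by ring
        _ = ∑ i, (M *ᵥ v) i • e i := rfl
        _ = 0 := by rw [hMv]; simp
    have := Fintype.linearIndependent_iff.mp hli' v hsum
    exact hv (funext this)
  have hcomm : M * Matrix.diagonal d' = Matrix.diagonal d * M := by
    ext i j
    rw [Matrix.mul_diagonal, Matrix.diagonal_mul]
    exact hM2rel j i
  have : d = d' := diag_conj_eq hdmono hdmono' hdet hcomm
  rw [this]
lemma mulVecLin_ker_bot {n : ℕ} {g : Matrix (Fin n ⊕ Fin n) (Fin n ⊕ Fin n) ℝ}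
    (hg : IsSymplectic n g) : LinearMap.ker g.mulVecLin = ⊥ := by
  rw [LinearMap.ker_eq_bot']
  intro m hm
  by_contra hne
  exact symplectic_det_ne_zero hg (exists_mulVec_eq_zero_iff.mp ⟨m, hne, hm⟩)

lemma map_span_range {n : ℕ} (g : Matrix (Fin n ⊕ Fin n) (Fin n ⊕ Fin n) ℝ)
    (v : Fin n → V2 n) :
    Submodule.map g.mulVecLin (Submodule.span ℝ (Set.range v)) =
      Submodule.span ℝ (Set.range (fun i => g *ᵥ v i)) := by
  rw [Submodule.map_span, ← Set.range_comp]
  rfl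

lemma standard_transport {n : ℕ} {g : Matrix (Fin n ⊕ Fin n) (Fin n ⊕ Fin n) ℝ}
    (hg : IsSymplectic n g) {e f : Fin n → V2 n} {Λ : Matrix (Fin n) (Fin n) ℝ}
    {L1 M1 L2 M2 : Submodule ℝ (V2 n)}
    (h : StandardPosition n e f L1 M1 L2 M2 Λ) :
    StandardPosition n (fun i => g *ᵥ e i) (fun i => g *ᵥ f i)
      (L1.map g.mulVecLin) (M1.map g.mulVecLin) (L2.map g.mulVecLin) (M2.map g.mulVecLin) Λ := by
  obtain ⟨hsb, hΔ, hL1, hL2, hM1, hM2⟩ := h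
  have hker := mulVecLin_ker_bot hg
  have hcomp : Sum.elim (fun i => g *ᵥ e i) (fun i => g *ᵥ f i) =
      ⇑g.mulVecLin ∘ Sum.elim e f := by
    funext k
    rcases k with k | k <;> simp [Matrix.mulVecLin_apply]
  refine ⟨⟨?_, ?_, ?_, ?_, ?_⟩, hΔ, ?_, ?_, ?_, ?_⟩
  · intro i j; exact (omega_mulVec hg _ _).trans (hsb.1 i j)
  · intro i j; exact (omega_mulVec hg _ _).trans (hsb.2.1 i j)
  · intro i j; exact (omega_mulVec hg _ _).trans (hsb.2.2.1 i j)
  · rw [hcomp]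
    exact hsb.2.2.2.1.map' g.mulVecLin hker
  · have hsurj : Function.Surjective g.mulVecLin :=
      LinearMap.injective_iff_surjective.mp (LinearMap.ker_eq_bot.mp hker)
    rw [hcomp, Set.range_comp, ← Submodule.map_span, hsb.2.2.2.2, Submodule.map_top,
      LinearMap.range_eq_top.mpr hsurj]
  · rw [hL1, map_span_range]
  · rw [hL2, map_span_range]
  · rw [hM1, map_span_range]
    have hfun : (fun i => g *ᵥ (e + f) i) =
        ((fun i => g *ᵥ e i) + fun i => g *ᵥ f i) := by
      funext i
      simp [Pi.add_apply, Matrix.mulVec_add]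
    rw [hfun]
  · rw [hM2, map_span_range]
    have hfun : (fun j => g *ᵥ (e - tmul n f Λ) j) =
        ((fun i => g *ᵥ e i) - tmul n (fun i => g *ᵥ f i) Λ) := by
      funext j
      simp only [Pi.sub_apply, Matrix.mulVec_sub]
      congr 1
      unfold tmul
      rw [← Matrix.mulVecLin_apply, map_sum]
      refine Finset.sum_congr rfl fun i _ => ?_
      rw [_root_.map_smul, Matrix.mulVecLin_apply]
    rw [hfun]
lemma omega_apply {n : ℕ} (x y : V2 n) :
    omegaForm n x y =
      ∑ i, (x (Sum.inl i) * y (Sum.inr i) - x (Sum.inr i) * y (Sum.inl i)) := by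
  unfold omegaForm Jn
  have hmul : ∀ k, (Matrix.fromBlocks 0 1 (-1) 0 *ᵥ y) k =
      Sum.elim (fun i => y (Sum.inr i)) (fun i => -y (Sum.inl i)) k := by
    intro k
    rcases k with i | i <;>
      simp [Matrix.mulVec, dotProduct, Fintype.sum_sum_type, Matrix.one_apply,
        Finset.sum_ite_eq]
  rw [dotProduct]
  rw [Fintype.sum_sum_type]
  simp only [hmul, Sum.elim_inl, Sum.elim_inr]
  rw [← Finset.sum_add_distrib]
  exact Finset.sum_congr rfl fun i _ => by ring

section Concrete
variable {n : ℕ}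

def cE (n : ℕ) : Fin n → V2 n := fun i => Pi.single (Sum.inl i) 1
def cF (n : ℕ) : Fin n → V2 n := fun i => Pi.single (Sum.inr i) 1

lemma cE_apply_inl (i j : Fin n) : cE n i (Sum.inl j) = if i = j then 1 else 0 := by
  simp [cE, Pi.single_apply, eq_comm]
lemma cE_apply_inr (i j : Fin n) : cE n i (Sum.inr j) = 0 := by simp [cE, Pi.single_apply]
lemma cF_apply_inl (i j : Fin n) : cF n i (Sum.inl j) = 0 := by simp [cF, Pi.single_apply]
lemma cF_apply_inr (i j : Fin n) : cF n i (Sum.inr j) = if i = j then 1 else 0 := by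
  simp [cF, Pi.single_apply, eq_comm]

lemma sum_cE_apply (c : Fin n → ℝ) :
    (∀ j, (∑ i, c i • cE n i) (Sum.inl j) = c j) ∧ (∀ j, (∑ i, c i • cE n i) (Sum.inr j) = 0) := by
  constructor <;> intro j <;>
    simp [Finset.sum_apply, cE_apply_inl, cE_apply_inr, Finset.sum_ite_eq, mul_ite]

lemma sum_cF_apply (c : Fin n → ℝ) :
    (∀ j, (∑ i, c i • cF n i) (Sum.inl j) = 0) ∧ (∀ j, (∑ i, c i • cF n i) (Sum.inr j) = c j) := by
  constructor <;> intro j <;>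
    simp [Finset.sum_apply, cF_apply_inl, cF_apply_inr, Finset.sum_ite_eq, mul_ite]

lemma mem_span_cE (x : V2 n) :
    x ∈ Submodule.span ℝ (Set.range (cE n)) ↔ ∀ j, x (Sum.inr j) = 0 := by
  rw [Submodule.mem_span_range_iff_exists_fun]
  constructor
  · rintro ⟨c, rfl⟩ j
    exact (sum_cE_apply c).2 j
  · intro hx
    refine ⟨fun i => x (Sum.inl i), funext fun k => ?_⟩
    rcases k with j | j
    · rw [(sum_cE_apply _).1 j]
    · rw [(sum_cE_apply _).2 j, hx j]

lemma mem_span_cF (x : V2 n) :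
    x ∈ Submodule.span ℝ (Set.range (cF n)) ↔ ∀ j, x (Sum.inl j) = 0 := by
  rw [Submodule.mem_span_range_iff_exists_fun]
  constructor
  · rintro ⟨c, rfl⟩ j
    exact (sum_cF_apply c).1 j
  · intro hx
    refine ⟨fun i => x (Sum.inr i), funext fun k => ?_⟩
    rcases k with j | j
    · rw [(sum_cF_apply _).1 j, hx j]
    · rw [(sum_cF_apply _).2 j]

lemma mem_span_cEF (x : V2 n) :
    x ∈ Submodule.span ℝ (Set.range (cE n + cF n)) ↔ ∀ j, x (Sum.inr j) = x (Sum.inl j) := by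
  rw [Submodule.mem_span_range_iff_exists_fun]
  have hev : ∀ (c : Fin n → ℝ),
      (∀ j, (∑ i, c i • (cE n + cF n) i) (Sum.inl j) = c j) ∧
      (∀ j, (∑ i, c i • (cE n + cF n) i) (Sum.inr j) = c j) := by
    intro c
    have h1 : ∑ i, c i • (cE n + cF n) i = (∑ i, c i • cE n i) + ∑ i, c i • cF n i := by
      rw [← Finset.sum_add_distrib]
      exact Finset.sum_congr rfl fun i _ => by simp [smul_add]
    rw [h1]
    constructor <;> intro j <;>
      simp [Pi.add_apply, (sum_cE_apply c).1, (sum_cE_apply c).2, (sum_cF_apply c).1,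
        (sum_cF_apply c).2]
  constructor
  · rintro ⟨c, rfl⟩ j
    rw [(hev c).1 j, (hev c).2 j]
  · intro hx
    refine ⟨fun i => x (Sum.inl i), funext fun k => ?_⟩
    rcases k with j | j
    · rw [(hev _).1 j]
    · rw [(hev _).2 j, hx j]

lemma mem_span_cM2 (d : Fin n → ℝ) (x : V2 n) :
    x ∈ Submodule.span ℝ (Set.range (cE n - tmul n (cF n) (Matrix.diagonal d))) ↔
      ∀ j, x (Sum.inr j) = -(d j * x (Sum.inl j)) := by
  rw [Submodule.mem_span_range_iff_exists_fun]
  have hgen : ∀ i, (cE n - tmul n (cF n) (Matrix.diagonal d)) i = cE n i - d i • cF n i := by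
    intro i
    rw [Pi.sub_apply, tmul_diagonal]
  have hev : ∀ (c : Fin n → ℝ),
      (∀ j, (∑ i, c i • (cE n - tmul n (cF n) (Matrix.diagonal d)) i) (Sum.inl j) = c j) ∧
      (∀ j, (∑ i, c i • (cE n - tmul n (cF n) (Matrix.diagonal d)) i) (Sum.inr j)
        = -(d j * c j)) := by
    intro c
    have h1 : ∑ i, c i • (cE n - tmul n (cF n) (Matrix.diagonal d)) i =
        (∑ i, c i • cE n i) - ∑ i, (c i * d i) • cF n i := by
      rw [← Finset.sum_sub_distrib]
      refine Finset.sum_congr rfl fun i _ => ?_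
      rw [hgen i, smul_sub, smul_smul]
    rw [h1]
    constructor <;> intro j <;>
      simp [Pi.sub_apply, (sum_cE_apply c).1, (sum_cE_apply c).2, (sum_cF_apply _).1,
        (sum_cF_apply _).2] <;> ring
  constructor
  · rintro ⟨c, rfl⟩ j
    rw [(hev c).1 j, (hev c).2 j]
  · intro hx
    refine ⟨fun i => x (Sum.inl i), funext fun k => ?_⟩
    rcases k with j | j
    · rw [(hev _).1 j]
    · rw [(hev _).2 j, hx j]

end Concrete
section Concrete2
variable {n : ℕ}

lemma omega_cE_cF (i j : Fin n) : omegaForm n (cE n i) (cF n j) = if i = j then 1 else 0 := by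
  rw [omega_apply]
  simp [cE_apply_inl, cE_apply_inr, cF_apply_inl, cF_apply_inr, mul_ite, Finset.sum_ite_eq]

lemma omega_cE_cE (i j : Fin n) : omegaForm n (cE n i) (cE n j) = 0 := by
  rw [omega_apply]; simp [cE_apply_inl, cE_apply_inr]

lemma omega_cF_cF (i j : Fin n) : omegaForm n (cF n i) (cF n j) = 0 := by
  rw [omega_apply]; simp [cF_apply_inl, cF_apply_inr]

lemma elim_cE_cF : Sum.elim (cE n) (cF n) = fun k => Pi.single k (1 : ℝ) := by
  funext k
  rcases k with i | i <;> rfl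

lemma isSympBasis_cEF : IsSymplecticBasis n (cE n) (cF n) := by
  have hfn : ⇑(Pi.basisFun ℝ (Fin n ⊕ Fin n)) = fun k => Pi.single k (1 : ℝ) :=
    funext fun k => Pi.basisFun_apply ℝ (Fin n ⊕ Fin n) k
  refine ⟨omega_cE_cE, omega_cF_cF, omega_cE_cF, ?_, ?_⟩
  · rw [elim_cE_cF, ← hfn]
    exact (Pi.basisFun ℝ (Fin n ⊕ Fin n)).linearIndependent
  · rw [elim_cE_cF, ← hfn]
    exact (Pi.basisFun ℝ (Fin n ⊕ Fin n)).span_eq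

-- independence of the four generator families
lemma cE_indep : LinearIndependent ℝ (cE n) := by
  rw [Fintype.linearIndependent_iff]
  intro c hc i
  have := congrFun hc (Sum.inl i)
  rwa [(sum_cE_apply c).1 i] at this

lemma cF_indep : LinearIndependent ℝ (cF n) := by
  rw [Fintype.linearIndependent_iff]
  intro c hc i
  have := congrFun hc (Sum.inr i)
  rwa [(sum_cF_apply c).2 i] at this

lemma cEF_indep : LinearIndependent ℝ (cE n + cF n) := by
  rw [Fintype.linearIndependent_iff]
  intro c hc i
  have hm : (0 : V2 n) ∈ Submodule.span ℝ (Set.range (cE n + cF n)) := Submodule.zero_mem _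
  -- direct: evaluate
  have h1 : ∑ j, c j • (cE n + cF n) j = (∑ j, c j • cE n j) + ∑ j, c j • cF n j := by
    rw [← Finset.sum_add_distrib]
    exact Finset.sum_congr rfl fun j _ => by simp [smul_add]
  rw [h1] at hc
  have := congrFun hc (Sum.inl i)
  rw [Pi.add_apply, (sum_cE_apply c).1 i, (sum_cF_apply c).1 i] at this
  simpa using this

lemma cM2_indep (d : Fin n → ℝ) : LinearIndependent ℝ (cE n - tmul n (cF n) (Matrix.diagonal d)) := by
  rw [Fintype.linearIndependent_iff]
  intro c hc i
  have h1 : ∑ j, c j • (cE n - tmul n (cF n) (Matrix.diagonal d)) j =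
      (∑ j, c j • cE n j) - ∑ j, (c j * d j) • cF n j := by
    rw [← Finset.sum_sub_distrib]
    refine Finset.sum_congr rfl fun j _ => ?_
    rw [Pi.sub_apply, tmul_diagonal, smul_sub, smul_smul]
  rw [h1] at hc
  have := congrFun hc (Sum.inl i)
  rw [Pi.sub_apply, (sum_cE_apply c).1 i, (sum_cF_apply _).1 i] at this
  simpa using this

end Concrete2
section Concrete3
variable {n : ℕ}

def flipEF (n : ℕ) : V2 n →ₗ[ℝ] V2 n where
  toFun x := Sum.elim (fun _ => (0 : ℝ)) (fun j => x (Sum.inl j))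
  map_add' x y := by funext k; rcases k with k | k <;> simp
  map_smul' c x := by funext k; rcases k with k | k <;> simp

def flipFE (n : ℕ) (d : Fin n → ℝ) : V2 n →ₗ[ℝ] V2 n where
  toFun x := Sum.elim (fun i => -(1 / d i) * x (Sum.inr i)) (fun _ => (0 : ℝ))
  map_add' x y := by funext k; rcases k with k | k <;> simp <;> ring
  map_smul' c x := by funext k; rcases k with k | k <;> simp <;> ring

lemma concrete_positive (d : Fin n → ℝ) (hd : ∀ i, 0 < d i) :
    PositiveQuadruple n (Submodule.span ℝ (Set.range (cE n)))
      (Submodule.span ℝ (Set.range (cE n + cF n)))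
      (Submodule.span ℝ (Set.range (cF n)))
      (Submodule.span ℝ (Set.range (cE n - tmul n (cF n) (Matrix.diagonal d)))) := by
  have hdne : ∀ i, d i ≠ 0 := fun i => (hd i).ne'
  set L1 := Submodule.span ℝ (Set.range (cE n)) with hL1
  set M1 := Submodule.span ℝ (Set.range (cE n + cF n)) with hM1
  set L2 := Submodule.span ℝ (Set.range (cF n)) with hL2
  set M2 := Submodule.span ℝ (Set.range (cE n - tmul n (cF n) (Matrix.diagonal d))) with hM2
  have hM1ev : ∀ i, ((cE n + cF n) i) = cE n i + cF n i := fun i => rfl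
  have hM2ev : ∀ i, ((cE n - tmul n (cF n) (Matrix.diagonal d)) i) = cE n i - d i • cF n i := by
    intro i
    rw [Pi.sub_apply, tmul_diagonal]
  refine ⟨⟨?_, ?_⟩, ⟨?_, ?_⟩, ⟨?_, ?_⟩, ⟨?_, ?_⟩, ?_, ?_, ?_, ?_, ?_, ?_, ?_⟩
  · rw [hL1, finrank_span_eq_card cE_indep, Fintype.card_fin]
  · exact omega_span_zero _ _ omega_cE_cE
  · rw [hM1, finrank_span_eq_card cEF_indep, Fintype.card_fin]
  · refine omega_span_zero _ _ ?_
    intro i j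
    rw [hM1ev, hM1ev, omega_apply]
    refine Finset.sum_eq_zero fun k _ => ?_
    simp only [Pi.add_apply]
    rw [cE_apply_inl, cE_apply_inr, cF_apply_inl, cF_apply_inr, cE_apply_inl, cE_apply_inr,
      cF_apply_inl, cF_apply_inr]
    by_cases h1 : i = k <;> by_cases h2 : j = k <;> simp [h1, h2]
  · rw [hL2, finrank_span_eq_card cF_indep, Fintype.card_fin]
  · exact omega_span_zero _ _ omega_cF_cF
  · rw [hM2, finrank_span_eq_card (cM2_indep d), Fintype.card_fin]
  · refine omega_span_zero _ _ ?_
    intro i j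
    rw [hM2ev, hM2ev, omega_apply]
    simp only [Pi.sub_apply, Pi.smul_apply, smul_eq_mul]
    refine Finset.sum_eq_zero fun k _ => ?_
    rw [cE_apply_inl, cE_apply_inl, cE_apply_inr, cE_apply_inr, cF_apply_inl, cF_apply_inl,
      cF_apply_inr, cF_apply_inr]
    by_cases h1 : i = k <;> by_cases h2 : j = k
    · subst h1; subst h2; ring
    · simp [h1, h2]
    · simp [h1, h2]
    · simp [h1, h2]
  -- transversality
  · rw [eq_bot_iff]
    intro x hx
    obtain ⟨h1, h2⟩ := Submodule.mem_inf.mp hx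
    rw [hL1, mem_span_cE] at h1
    rw [hM1, mem_span_cEF] at h2
    have : x = 0 := by
      funext k
      rcases k with j | j
      · have := h2 j; rw [h1 j] at this; simpa using this.symm
      · simpa using h1 j
    simp [this]
  · rw [eq_bot_iff]
    intro x hx
    obtain ⟨h1, h2⟩ := Submodule.mem_inf.mp hx
    rw [hM1, mem_span_cEF] at h1
    rw [hL2, mem_span_cF] at h2
    have : x = 0 := by
      funext k
      rcases k with j | j
      · simpa using h2 j
      · rw [h1 j]; simpa using h2 j
    simp [this]
  · rw [eq_bot_iff]
    intro x hx
    obtain ⟨h1, h2⟩ := Submodule.mem_inf.mp hx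
    rw [hL1, mem_span_cE] at h1
    rw [hL2, mem_span_cF] at h2
    have : x = 0 := by
      funext k
      rcases k with j | j
      · simpa using h2 j
      · simpa using h1 j
    simp [this]
  · rw [eq_bot_iff]
    intro x hx
    obtain ⟨h1, h2⟩ := Submodule.mem_inf.mp hx
    rw [hL1, mem_span_cE] at h1
    rw [hM2, mem_span_cM2] at h2
    have : x = 0 := by
      funext k
      rcases k with j | j
      · have := h2 j
        rw [h1 j] at this
        have hz : d j * x (Sum.inl j) = 0 := by linarith [this]
        exact (mul_eq_zero.mp hz).resolve_left (hdne j)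
      · simpa using h1 j
    simp [this]
  · rw [eq_bot_iff]
    intro x hx
    obtain ⟨h1, h2⟩ := Submodule.mem_inf.mp hx
    rw [hM2, mem_span_cM2] at h1
    rw [hL2, mem_span_cF] at h2
    have : x = 0 := by
      funext k
      rcases k with j | j
      · simpa using h2 j
      · have := h1 j
        rw [h2 j] at this
        simpa using this
    simp [this]
  -- graph map φ for M1
  · have hmapsto : ∀ x ∈ L1, flipEF n x ∈ L2 := by
      intro x _
      rw [hL2, mem_span_cF]
      intro j
      rfl
    refine ⟨(flipEF n).restrict hmapsto, ?_, ?_⟩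
    · intro x
      constructor
      · intro hx
        rw [hM1, mem_span_cEF] at hx
        refine ⟨⟨fun k => Sum.elim (fun i => x (Sum.inl i)) (fun _ => 0) k, ?_⟩, ?_⟩
        · rw [hL1, mem_span_cE]; intro j; rfl
        · rw [LinearMap.restrict_apply]
          funext k
          rcases k with j | j
          · simp [flipEF]
          · simp [flipEF]
            exact hx j
      · rintro ⟨⟨u, hu⟩, rfl⟩
        rw [hL1, mem_span_cE] at hu
        rw [hM1, mem_span_cEF]
        intro j
        rw [LinearMap.restrict_apply]
        simp [flipEF, hu j]
    · rintro ⟨v, hv⟩ hvne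
      rw [LinearMap.restrict_apply]
      rw [hL1, mem_span_cE] at hv
      simp only [omega_apply, flipEF, LinearMap.coe_mk, AddHom.coe_mk, Sum.elim_inl, Sum.elim_inr]
      have hterm : ∀ i, v (Sum.inl i) * v (Sum.inl i) - v (Sum.inr i) * 0 =
          v (Sum.inl i) ^ 2 := fun i => by ring
      have hex : ∃ i, v (Sum.inl i) ≠ 0 := by
        by_contra hall
        push_neg at hall
        apply hvne
        apply Subtype.ext
        funext k
        rcases k with j | j
        · exact hall j
        · exact hv j
      obtain ⟨i0, hi0⟩ := hex
      refine Finset.sum_pos' (fun i _ => ?_) ⟨i0, Finset.mem_univ i0, ?_⟩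
      · rw [hterm i]; positivity
      · rw [hterm i0]; positivity
  -- graph map ψ for M2
  · have hmapsto : ∀ x ∈ L2, flipFE n d x ∈ L1 := by
      intro x _
      rw [hL1, mem_span_cE]
      intro j
      rfl
    refine ⟨(flipFE n d).restrict hmapsto, ?_, ?_⟩
    · intro x
      constructor
      · intro hx
        rw [hM2, mem_span_cM2] at hx
        refine ⟨⟨fun k => Sum.elim (fun _ => 0) (fun j => x (Sum.inr j)) k, ?_⟩, ?_⟩
        · rw [hL2, mem_span_cF]; intro j; rfl
        · rw [LinearMap.restrict_apply]
          funext k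
          rcases k with j | j
          · simp only [Pi.add_apply, flipFE, LinearMap.coe_mk, AddHom.coe_mk, Sum.elim_inl,
              Sum.elim_inr]
            rw [hx j]
            rw [zero_add, neg_mul_neg, one_div, inv_mul_eq_div,
              mul_div_cancel_left₀ _ (hdne j)]
          · simp [flipFE]
      · rintro ⟨⟨u, hu⟩, rfl⟩
        rw [hL2, mem_span_cF] at hu
        rw [hM2, mem_span_cM2]
        intro j
        rw [LinearMap.restrict_apply]
        simp only [Pi.add_apply, flipFE, LinearMap.coe_mk, AddHom.coe_mk, Sum.elim_inl,
          Sum.elim_inr, hu j]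
        field_simp
        rw [zero_add, mul_neg, neg_neg, mul_div_cancel₀ _ (hdne j), add_zero]
    · rintro ⟨v, hv⟩ hvne
      rw [LinearMap.restrict_apply]
      rw [hL2, mem_span_cF] at hv
      simp only [omega_apply, flipFE, LinearMap.coe_mk, AddHom.coe_mk, Sum.elim_inl, Sum.elim_inr]
      have hterm : ∀ i, v (Sum.inl i) * 0 - v (Sum.inr i) * (-(1 / d i) * v (Sum.inr i)) =
          v (Sum.inr i) ^ 2 / d i := fun i => by field_simp; ring
      have hex : ∃ i, v (Sum.inr i) ≠ 0 := by
        by_contra hall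
        push_neg at hall
        apply hvne
        apply Subtype.ext
        funext k
        rcases k with j | j
        · exact hv j
        · exact hall j
      obtain ⟨i0, hi0⟩ := hex
      refine Finset.sum_pos' (fun i _ => ?_) ⟨i0, Finset.mem_univ i0, ?_⟩
      · rw [hterm i]
        exact div_nonneg (sq_nonneg _) (hd i).le
      · rw [hterm i0]
        exact div_pos (by positivity) (hd i0)

lemma concrete_standard (Λ : Matrix (Fin n) (Fin n) ℝ) (hΛ : InDelta n Λ) :
    StandardPosition n (cE n) (cF n) (Submodule.span ℝ (Set.range (cE n)))
      (Submodule.span ℝ (Set.range (cE n + cF n)))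
      (Submodule.span ℝ (Set.range (cF n)))
      (Submodule.span ℝ (Set.range (cE n - tmul n (cF n) Λ))) Λ :=
  ⟨isSympBasis_cEF, hΛ, rfl, rfl, rfl, rfl⟩

end Concrete3
theorem positive_quadruple_classification (n : ℕ) :
    -- two positive quadruples have the same invariant `Λ` iff they are in the same
    -- `Sp(2n,ℝ)`-orbit
    (∀ L1 M1 L2 M2 L1' M1' L2' M2' : Submodule ℝ (V2 n),
      PositiveQuadruple n L1 M1 L2 M2 → PositiveQuadruple n L1' M1' L2' M2' →
      ∀ e f Λ e' f' Λ',
        StandardPosition n e f L1 M1 L2 M2 Λ →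
        StandardPosition n e' f' L1' M1' L2' M2' Λ' →
        (Λ = Λ' ↔ ∃ g, IsSymplectic n g ∧
          L1.map g.mulVecLin = L1' ∧ M1.map g.mulVecLin = M1' ∧
          L2.map g.mulVecLin = L2' ∧ M2.map g.mulVecLin = M2')) ∧
    -- every `Λ ∈ Δ_n` is the invariant of some positive quadruple
    (∀ Λ, InDelta n Λ → ∃ (L1 M1 L2 M2 : Submodule ℝ (V2 n)) (e f : Fin n → V2 n),
      PositiveQuadruple n L1 M1 L2 M2 ∧ StandardPosition n e f L1 M1 L2 M2 Λ) := by
  constructor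
  · intro L1 M1 L2 M2 L1' M1' L2' M2' _ _ e f Λ e' f' Λ' hstd hstd'
    constructor
    · rintro rfl
      obtain ⟨g, hgsymp, hgmap⟩ := exists_symplectic_map hstd.1 hstd'.1
      have hge : (fun i => g *ᵥ e i) = e' := funext fun i => hgmap (Sum.inl i)
      have hgf : (fun i => g *ᵥ f i) = f' := funext fun i => hgmap (Sum.inr i)
      have htr := standard_transport hgsymp hstd
      obtain ⟨_, _, t1, t2, t3, t4⟩ := htr
      refine ⟨g, hgsymp, ?_, ?_, ?_, ?_⟩
      · rw [t1, hge, ← hstd'.2.2.1]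
      · rw [t3, hge, hgf, ← hstd'.2.2.2.2.1]
      · rw [t2, hgf, ← hstd'.2.2.2.1]
      · rw [t4, hge, hgf, ← hstd'.2.2.2.2.2]
    · rintro ⟨g, hgsymp, hm1, hm2, hm3, hm4⟩
      have htr := standard_transport hgsymp hstd
      rw [hm1, hm2, hm3, hm4] at htr
      exact invariant_unique htr hstd'
  · intro Λ hΛ
    refine ⟨Submodule.span ℝ (Set.range (cE n)), Submodule.span ℝ (Set.range (cE n + cF n)),
      Submodule.span ℝ (Set.range (cF n)),
      Submodule.span ℝ (Set.range (cE n - tmul n (cF n) Λ)), cE n, cF n, ?_,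
      concrete_standard Λ hΛ⟩
    obtain ⟨d, rfl, hdpos, _⟩ := hΛ
    exact concrete_positive d hdpos
end
end

section
/- Let v_1, v_2, v_3 be pairwise transverse decorated Lagrangians in (ℝ^{2n}, ω) with underlying Lagrangians L_1, L_2, L_3. Then the matrix Λ_{12}Λ_{32}^{−1}Λ_{31} is symmetric, and the Maslov index μ_n(L_1, L_2, L_3) equals the signature of Λ_{12}Λ_{32}^{−1}Λ_{31} (the signature of the quadratic form x ↦ ᵀx (Λ_{12}Λ_{32}^{−1}Λ_{31}) x on ℝ^n). -/
open Matrix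

noncomputable section

/-- The largest dimension of a subspace on which `q` is positive definite. -/
def posIndex {V : Type*} [AddCommGroup V] [Module ℝ V] (q : V → ℝ) : ℕ :=
  sSup {d : ℕ | ∃ W : Submodule ℝ V, Module.finrank ℝ W = d ∧ ∀ v ∈ W, v ≠ 0 → 0 < q v}

/-- The signature `p − q` of a quadratic form on a real vector space. -/
def signatureQ {V : Type*} [AddCommGroup V] [Module ℝ V] (q : V → ℝ) : ℤ :=
  (posIndex q : ℤ) - (posIndex (fun v => -q v) : ℤ)

/-- A decorated Lagrangian: a basis `v` of a Lagrangian subspace of `ℝ^{2n}`. -/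
def IsDecorated (n : ℕ) (v : Fin n → V2 n) : Prop :=
  LinearIndependent ℝ v ∧ IsLagrangian n (Submodule.span ℝ (Set.range v))

/-- The symplectic `Λ`-length of two decorated Lagrangians: `(Λ_{v,w})_{ij} = ω(v_i, w_j)`. -/
def LamM (n : ℕ) (v w : Fin n → V2 n) : Matrix (Fin n) (Fin n) ℝ :=
  fun i j => omegaForm n (v i) (w j)

lemma Jn_transpose (n : ℕ) : (Jn n)ᵀ = - Jn n := by
  rw [Jn, Matrix.fromBlocks_transpose, Matrix.fromBlocks_neg]
  congr 1 <;> simp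

lemma omega_skew (n : ℕ) (x y : V2 n) : omegaForm n x y = - omegaForm n y x := by
  unfold omegaForm
  calc x ⬝ᵥ (Jn n).mulVec y = (Jn n).mulVec y ⬝ᵥ x := dotProduct_comm _ _
    _ = y ᵥ* (Jn n)ᵀ ⬝ᵥ x := by rw [Matrix.vecMul_transpose]
    _ = - (y ⬝ᵥ (Jn n).mulVec x) := by
        rw [Jn_transpose, Matrix.vecMul_neg, neg_dotProduct, Matrix.dotProduct_mulVec]

lemma omega_nondeg (n : ℕ) (u : V2 n) (h : ∀ w, omegaForm n w u = 0) : u = 0 := by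
  have hJu : (Jn n).mulVec u = 0 := by
    ext m
    have := h (Pi.single m 1)
    simpa [omegaForm, dotProduct, Pi.single_apply] using this
  have := congrArg (fun w => (Jn n).mulVec w) hJu
  simpa [Matrix.mulVec_mulVec, Jn_mul_Jn, Matrix.neg_mulVec] using this

def omegaBilin (n : ℕ) : V2 n →ₗ[ℝ] V2 n →ₗ[ℝ] ℝ := Matrix.toLinearMap₂' ℝ (Jn n)

lemma omegaBilin_apply (n : ℕ) (x y : V2 n) : omegaBilin n x y = omegaForm n x y := by
  rw [omegaBilin, Matrix.toLinearMap₂'_apply', omegaForm]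

lemma omega_sum_left {ι : Type*} (s : Finset ι) (n : ℕ) (f : ι → V2 n) (y : V2 n) :
    omegaForm n (∑ i ∈ s, f i) y = ∑ i ∈ s, omegaForm n (f i) y := by
  simp only [← omegaBilin_apply]
  rw [map_sum]
  simp

lemma omega_sum_right {ι : Type*} (s : Finset ι) (n : ℕ) (x : V2 n) (f : ι → V2 n) :
    omegaForm n x (∑ i ∈ s, f i) = ∑ i ∈ s, omegaForm n x (f i) := by
  simp only [← omegaBilin_apply]
  rw [map_sum]

lemma omega_smul_left (n : ℕ) (c : ℝ) (x y : V2 n) :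
    omegaForm n (c • x) y = c * omegaForm n x y := by
  simp only [← omegaBilin_apply, _root_.map_smul]; simp

lemma omega_smul_right (n : ℕ) (c : ℝ) (x y : V2 n) :
    omegaForm n x (c • y) = c * omegaForm n x y := by
  simp only [← omegaBilin_apply, _root_.map_smul]; simp

lemma omega_add_left (n : ℕ) (x x' y : V2 n) :
    omegaForm n (x + x') y = omegaForm n x y + omegaForm n x' y := by
  simp only [← omegaBilin_apply, map_add]; simp

lemma omega_add_right (n : ℕ) (x y y' : V2 n) :
    omegaForm n x (y + y') = omegaForm n x y + omegaForm n x y' := by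
  simp only [← omegaBilin_apply, map_add]

lemma sup_eq_top (n : ℕ) (va vb : Fin n → V2 n) (ha : IsDecorated n va)
    (hb : IsDecorated n vb)
    (hab : Submodule.span ℝ (Set.range va) ⊓ Submodule.span ℝ (Set.range vb) = ⊥) :
    Submodule.span ℝ (Set.range va) ⊔ Submodule.span ℝ (Set.range vb) = ⊤ := by
  apply Submodule.eq_top_of_finrank_eq
  have h := Submodule.finrank_sup_add_finrank_inf_eq (Submodule.span ℝ (Set.range va))
    (Submodule.span ℝ (Set.range vb))
  rw [hab, finrank_bot, ha.2.1, hb.2.1] at h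
  have hV : Module.finrank ℝ (V2 n) = n + n := by
    simp [Module.finrank_pi]
  omega

lemma omega_zero_of_mem_span (n : ℕ) (v : Fin n → V2 n) (u : V2 n)
    (h : ∀ i, omegaForm n (v i) u = 0) (w : V2 n)
    (hw : w ∈ Submodule.span ℝ (Set.range v)) : omegaForm n w u = 0 := by
  obtain ⟨c, rfl⟩ := Submodule.mem_span_range_iff_exists_fun ℝ |>.mp hw
  rw [omega_sum_left]
  simp [omega_smul_left, h]

lemma lam_isUnit_det (n : ℕ) (va vb : Fin n → V2 n) (ha : IsDecorated n va)
    (hb : IsDecorated n vb)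
    (hab : Submodule.span ℝ (Set.range va) ⊓ Submodule.span ℝ (Set.range vb) = ⊥) :
    IsUnit (LamM n va vb).det := by
  rw [isUnit_iff_ne_zero]
  intro hdet
  obtain ⟨c, hc, hmul⟩ := (Matrix.exists_mulVec_eq_zero_iff).mpr hdet
  set u : V2 n := ∑ k, c k • vb k with hu
  have hmem : u ∈ Submodule.span ℝ (Set.range vb) := by
    apply Submodule.sum_mem
    intro k _
    exact Submodule.smul_mem _ _ (Submodule.subset_span ⟨k, rfl⟩)
  have h1 : ∀ m, omegaForm n (va m) u = 0 := by
    intro m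
    have := congrFun hmul m
    simp only [Matrix.mulVec, dotProduct, Pi.zero_apply] at this
    rw [hu, omega_sum_right]
    simpa [omega_smul_right, LamM, mul_comm] using this
  have h2 : ∀ m, omegaForm n (vb m) u = 0 := fun m =>
    hb.2.2 _ (Submodule.subset_span ⟨m, rfl⟩) _ hmem
  have hzero : u = 0 := by
    apply omega_nondeg
    intro w
    have hw : w ∈ Submodule.span ℝ (Set.range va) ⊔ Submodule.span ℝ (Set.range vb) := by
      rw [sup_eq_top n va vb ha hb hab]; trivial
    obtain ⟨a, hamem, b, hbmem, rfl⟩ := Submodule.mem_sup.mp hw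
    rw [omega_add_left, omega_zero_of_mem_span n va u h1 a hamem,
      omega_zero_of_mem_span n vb u h2 b hbmem, add_zero]
  apply hc
  have := (Fintype.linearIndependent_iff.mp hb.1) c (by rw [← hu, hzero])
  funext k; exact this k

lemma posIndex_equiv {V W : Type*} [AddCommGroup V] [Module ℝ V] [AddCommGroup W] [Module ℝ W]
    (e : V ≃ₗ[ℝ] W) (q : W → ℝ) : posIndex (fun v => q (e v)) = posIndex q := by
  unfold posIndex
  congr 1
  ext d
  constructor
  · rintro ⟨S, hS, hpos⟩
    refine ⟨S.map (e : V →ₗ[ℝ] W), ?_, ?_⟩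
    · rw [LinearEquiv.finrank_map_eq]; exact hS
    · rintro w hw hne
      obtain ⟨v, hv, rfl⟩ := Submodule.mem_map.mp hw
      exact hpos v hv (by rintro rfl; simp at hne)
  · rintro ⟨S, hS, hpos⟩
    refine ⟨S.map (e.symm : W →ₗ[ℝ] V), ?_, ?_⟩
    · rw [LinearEquiv.finrank_map_eq]; exact hS
    · rintro v hv hne
      obtain ⟨w, hw, rfl⟩ := Submodule.mem_map.mp hv
      have : (0:ℝ) < q w := hpos w hw (by rintro rfl; simp at hne)
      simpa using this

lemma signatureQ_equiv {V W : Type*} [AddCommGroup V] [Module ℝ V] [AddCommGroup W] [Module ℝ W]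
    (e : V ≃ₗ[ℝ] W) (q : W → ℝ) : signatureQ (fun v => q (e v)) = signatureQ q := by
  unfold signatureQ
  rw [posIndex_equiv e q, posIndex_equiv e (fun w => -q w)]


/-- The Maslov index of a pairwise transverse triple of Lagrangians is the signature of the
symmetric matrix `Λ_{12} Λ_{32}⁻¹ Λ_{31}`. -/
theorem maslov_index_via_lambda_lengths (n : ℕ) (v1 v2 v3 : Fin n → V2 n)
    (h1 : IsDecorated n v1) (h2 : IsDecorated n v2) (h3 : IsDecorated n v3)
    (h12 : Submodule.span ℝ (Set.range v1) ⊓ Submodule.span ℝ (Set.range v2) = ⊥)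
    (h23 : Submodule.span ℝ (Set.range v2) ⊓ Submodule.span ℝ (Set.range v3) = ⊥)
    (h13 : Submodule.span ℝ (Set.range v1) ⊓ Submodule.span ℝ (Set.range v3) = ⊥) :
    (LamM n v1 v2 * (LamM n v3 v2)⁻¹ * LamM n v3 v1).IsSymm ∧
    ∀ φ : Submodule.span ℝ (Set.range v1) →ₗ[ℝ] Submodule.span ℝ (Set.range v3),
      IsGraphMap n (Submodule.span ℝ (Set.range v1)) (Submodule.span ℝ (Set.range v2))
        (Submodule.span ℝ (Set.range v3)) φ →
      signatureQ (fun v : ↥(Submodule.span ℝ (Set.range v1)) =>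
          omegaForm n (v : V2 n) (φ v : V2 n)) =
        signatureQ (fun x : Fin n → ℝ =>
          x ⬝ᵥ (LamM n v1 v2 * (LamM n v3 v2)⁻¹ * LamM n v3 v1).mulVec x) := by
  -- isotropy facts
  have hiso1 : ∀ i k, omegaForm n (v1 i) (v1 k) = 0 := fun i k =>
    h1.2.2 _ (Submodule.subset_span ⟨i, rfl⟩) _ (Submodule.subset_span ⟨k, rfl⟩)
  have hiso2 : ∀ i k, omegaForm n (v2 i) (v2 k) = 0 := fun i k =>
    h2.2.2 _ (Submodule.subset_span ⟨i, rfl⟩) _ (Submodule.subset_span ⟨k, rfl⟩)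
  have hiso3 : ∀ i k, omegaForm n (v3 i) (v3 k) = 0 := fun i k =>
    h3.2.2 _ (Submodule.subset_span ⟨i, rfl⟩) _ (Submodule.subset_span ⟨k, rfl⟩)
  -- decomposition of v1 along span v2 ⊕ span v3
  have hT23 : Submodule.span ℝ (Set.range v2) ⊔ Submodule.span ℝ (Set.range v3) = ⊤ :=
    sup_eq_top n v2 v3 h2 h3 h23
  have hdecomp : ∀ j, ∃ xy : (Fin n → ℝ) × (Fin n → ℝ),
      v1 j = (∑ k, xy.1 k • v2 k) + (∑ k, xy.2 k • v3 k) := by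
    intro j
    have hj : v1 j ∈ Submodule.span ℝ (Set.range v2) ⊔ Submodule.span ℝ (Set.range v3) := by
      rw [hT23]; trivial
    obtain ⟨a, hamem, b, hbmem, heq⟩ := Submodule.mem_sup.mp hj
    obtain ⟨x, hx⟩ := Submodule.mem_span_range_iff_exists_fun ℝ |>.mp hamem
    obtain ⟨y, hy⟩ := Submodule.mem_span_range_iff_exists_fun ℝ |>.mp hbmem
    exact ⟨(x, y), by rw [hx, hy, heq]⟩
  choose XY hXY using hdecomp
  set X : Matrix (Fin n) (Fin n) ℝ := fun k j => (XY j).1 k with hXdef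
  set Y : Matrix (Fin n) (Fin n) ℝ := fun k j => (XY j).2 k with hYdef
  -- expansions
  have expandR : ∀ (w : V2 n) (j : Fin n), omegaForm n w (v1 j) =
      (∑ k, X k j * omegaForm n w (v2 k)) + (∑ k, Y k j * omegaForm n w (v3 k)) := by
    intro w j
    rw [hXY j, omega_add_right, omega_sum_right, omega_sum_right]
    simp [omega_smul_right]
    rfl
  have expandL : ∀ (j : Fin n) (w : V2 n), omegaForm n (v1 j) w =
      (∑ k, X k j * omegaForm n (v2 k) w) + (∑ k, Y k j * omegaForm n (v3 k) w) := by
    intro j w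
    rw [hXY j, omega_add_left, omega_sum_left, omega_sum_left]
    simp [omega_smul_left]
    rfl
  -- matrix identities
  have hM31 : LamM n v3 v1 = LamM n v3 v2 * X := by
    ext m j
    rw [Matrix.mul_apply]
    show omegaForm n (v3 m) (v1 j) = _
    rw [expandR]
    simp [hiso3, LamM, mul_comm]
  have hM12 : LamM n v1 v2 = Yᵀ * LamM n v3 v2 := by
    ext i j
    rw [Matrix.mul_apply]
    show omegaForm n (v1 i) (v2 j) = _
    rw [expandL]
    simp [hiso2, LamM, Matrix.transpose_apply]
  have hM13 : LamM n v1 v3 = Xᵀ * LamM n v2 v3 := by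
    ext i j
    rw [Matrix.mul_apply]
    show omegaForm n (v1 i) (v3 j) = _
    rw [expandL]
    simp [hiso3, LamM, Matrix.transpose_apply]
  have hM11 : LamM n v1 v2 * X + LamM n v1 v3 * Y = 0 := by
    ext i j
    rw [Matrix.add_apply, Matrix.mul_apply, Matrix.mul_apply]
    have := (expandR (v1 i) j).symm
    rw [hiso1 i j] at this
    show (∑ k, LamM n v1 v2 i k * X k j) + (∑ k, LamM n v1 v3 i k * Y k j) = 0
    rw [← this]
    congr 1 <;> · apply Finset.sum_congr rfl; intro k _; rw [mul_comm]; rfl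
  have hU32 : IsUnit (LamM n v3 v2).det :=
    lam_isUnit_det n v3 v2 h3 h2 (by rw [inf_comm]; exact h23)
  have hU23 : IsUnit (LamM n v2 v3).det := lam_isUnit_det n v2 v3 h2 h3 h23
  set M := LamM n v1 v2 * (LamM n v3 v2)⁻¹ * LamM n v3 v1 with hMdef
  have hMX : M = LamM n v1 v2 * X := by
    rw [hMdef, hM31, ← Matrix.mul_assoc, Matrix.mul_assoc (LamM n v1 v2),
      Matrix.nonsing_inv_mul _ hU32, Matrix.mul_one]
  have hMY : M = -(LamM n v1 v3 * Y) := by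
    rw [hMX, eq_neg_iff_add_eq_zero]
    exact hM11
  have hlamT : (LamM n v2 v3)ᵀ = -(LamM n v3 v2) := by
    ext i j
    rw [Matrix.transpose_apply]
    show omegaForm n (v2 j) (v3 i) = -(omegaForm n (v3 i) (v2 j))
    rw [omega_skew]
  have hsymm : Mᵀ = M := by
    calc Mᵀ = (-(Xᵀ * LamM n v2 v3 * Y))ᵀ := by
            rw [hMY, hM13]
      _ = -(Yᵀ * (LamM n v2 v3)ᵀ * X) := by
            rw [Matrix.transpose_neg, Matrix.transpose_mul, Matrix.transpose_mul,
              Matrix.transpose_transpose, Matrix.mul_assoc]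
      _ = Yᵀ * LamM n v3 v2 * X := by
            rw [hlamT]
            rw [Matrix.mul_neg, Matrix.neg_mul, neg_neg, Matrix.mul_assoc]
      _ = M := by rw [hMX, hM12]
  refine ⟨hsymm, ?_⟩
  intro φ hφ
  -- the basis elements of L1
  have hmem1 : ∀ j, v1 j ∈ Submodule.span ℝ (Set.range v1) := fun j =>
    Submodule.subset_span ⟨j, rfl⟩
  set b : Fin n → ↥(Submodule.span ℝ (Set.range v1)) := fun j => ⟨v1 j, hmem1 j⟩ with hbdef
  set c : Fin n → V2 n := fun j => ((φ (b j) : Submodule.span ℝ (Set.range v3)) : V2 n)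
    with hcdef
  have hcmem : ∀ j, c j ∈ Submodule.span ℝ (Set.range v3) := fun j => (φ (b j)).2
  have hCex : ∀ j, ∃ C : Fin n → ℝ, ∑ k, C k • v3 k = c j := fun j =>
    Submodule.mem_span_range_iff_exists_fun ℝ |>.mp (hcmem j)
  choose C hC using hCex
  set Cm : Matrix (Fin n) (Fin n) ℝ := fun k j => C j k with hCmdef
  -- graph relation: v1 j + c j ∈ L2
  have hgr : ∀ j, v1 j + c j ∈ Submodule.span ℝ (Set.range v2) := fun j =>
    (hφ _).mpr ⟨b j, by rw [hcdef]⟩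
  -- Λ23 * (Y + Cm) = 0
  have hYC : LamM n v2 v3 * (Y + Cm) = 0 := by
    ext m j
    rw [Matrix.mul_apply, Matrix.zero_apply]
    have h0 : omegaForm n (v2 m) (v1 j + c j) = 0 :=
      h2.2.2 _ (Submodule.subset_span ⟨m, rfl⟩) _ (hgr j)
    rw [omega_add_right] at h0
    have hc' : omegaForm n (v2 m) (c j) = ∑ k, Cm k j * omegaForm n (v2 m) (v3 k) := by
      rw [← hC j, omega_sum_right]
      simp [omega_smul_right, hCmdef]
    rw [expandR, hc'] at h0
    simp only [hiso2, mul_zero, Finset.sum_const_zero, zero_add] at h0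
    calc ∑ k, LamM n v2 v3 m k * (Y + Cm) k j
        = (∑ k, Y k j * omegaForm n (v2 m) (v3 k))
          + ∑ k, Cm k j * omegaForm n (v2 m) (v3 k) := by
          rw [← Finset.sum_add_distrib]
          apply Finset.sum_congr rfl
          intro k _
          show LamM n v2 v3 m k * (Y k j + Cm k j) = _
          unfold LamM
          ring
      _ = 0 := h0
  have hCY : Cm = -Y := by
    have := congrArg (fun A => (LamM n v2 v3)⁻¹ * A) hYC
    simp only [← Matrix.mul_assoc, Matrix.nonsing_inv_mul _ hU23, Matrix.one_mul,
      Matrix.mul_zero] at this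
    linear_combination (norm := abel) this
  -- the matrix of the Maslov form is M
  have hB : ∀ i j, omegaForm n (v1 i) (c j) = M i j := by
    intro i j
    have h1' : omegaForm n (v1 i) (c j) = ∑ k, Cm k j * omegaForm n (v1 i) (v3 k) := by
      rw [← hC j, omega_sum_right]
      simp [omega_smul_right, hCmdef]
    rw [h1', hMY]
    rw [hCY]
    simp only [Matrix.neg_apply, Matrix.mul_apply]
    rw [← Finset.sum_neg_distrib]
    apply Finset.sum_congr rfl
    intro k _
    show -Y k j * omegaForm n (v1 i) (v3 k) = -(LamM n v1 v3 i k * Y k j)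
    unfold LamM
    ring
  -- basis of L1 and the linear equivalence
  let hbasis : Module.Basis (Fin n) ℝ ↥(Submodule.span ℝ (Set.range v1)) := Module.Basis.span h1.1
  have hbasis_eq : ∀ j, hbasis j = b j := by
    intro j
    apply Subtype.ext
    show ((Module.Basis.span h1.1) j : V2 n) = _
    rw [Module.Basis.span_apply h1.1 j]
  set e : (Fin n → ℝ) ≃ₗ[ℝ] ↥(Submodule.span ℝ (Set.range v1)) := hbasis.equivFun.symm
    with hedef
  have he : ∀ x : Fin n → ℝ, e x = ∑ i, x i • b i := by
    intro x
    rw [hedef, Module.Basis.equivFun_symm_apply]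
    exact Finset.sum_congr rfl fun i _ => by rw [hbasis_eq]
  have key : ∀ x : Fin n → ℝ,
      omegaForm n ((e x : ↥(Submodule.span ℝ (Set.range v1))) : V2 n) ((φ (e x)) : V2 n) =
      x ⬝ᵥ M.mulVec x := by
    intro x
    have hcoe1 : ((e x : ↥(Submodule.span ℝ (Set.range v1))) : V2 n) = ∑ i, x i • v1 i := by
      rw [he]
      push_cast
      exact Finset.sum_congr rfl fun i _ => rfl
    have hcoe2 : ((φ (e x)) : V2 n) = ∑ j, x j • c j := by
      rw [he, map_sum]
      push_cast
      apply Finset.sum_congr rfl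
      intro j _
      rw [_root_.map_smul]
      simp [hcdef]
    rw [hcoe1, hcoe2, omega_sum_left]
    have : ∀ i, omegaForm n (x i • v1 i) (∑ j, x j • c j) = x i * ∑ j, M i j * x j := by
      intro i
      rw [omega_smul_left, omega_sum_right]
      congr 1
      apply Finset.sum_congr rfl
      intro j _
      rw [omega_smul_right, hB i j]
      ring
    rw [Finset.sum_congr rfl fun i _ => this i]
    simp [dotProduct, Matrix.mulVec]
  have heq := signatureQ_equiv e
    (fun v : ↥(Submodule.span ℝ (Set.range v1)) => omegaForm n (v : V2 n) ((φ v) : V2 n))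
  rw [← heq]
  congr 1
  funext x
  exact key x
end
end
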